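/- Let 0 ≤ ε ≤ 1/2 and let f, g : {0,1}^n → {0,1}^k be functions such that f(x) and g(x) are each exactly uniformly distributed on {0,1}^k when x is uniform on {0,1}^n. Then Pr_{(x,y)_ε}[f(x) = g(y)] ≤ 2^{-kε/(1-ε)}. -/

import Mathlib

set_option maxHeartbeats 1000000


open Classical

/-- The weight of a pair `(x, y)` under the distribution `(x,y)_ε`. -/
noncomputable def pairWeight (ε : ℝ) {n : ℕ} (x y : Fin n → Bool) : ℝ :=
  ∏ i, if x i = y i then (1 - ε) / 2 else ε / 2

/-- `Pr_{(x,y)_ε}[P x y]`. -/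
noncomputable def prPair (ε : ℝ) {n : ℕ}
    (P : (Fin n → Bool) → (Fin n → Bool) → Prop) : ℝ :=
  ∑ x : Fin n → Bool, ∑ y : Fin n → Bool, if P x y then pairWeight ε x y else 0

/-- The output distribution of `f` on a uniformly random input. -/
noncomputable def outDist {n k : ℕ} (f : (Fin n → Bool) → (Fin k → Bool))
    (z : Fin k → Bool) : ℝ :=
  (∑ x : Fin n → Bool, if f x = z then (1 : ℝ) else 0) / 2 ^ n


open Real

namespace SSE


noncomputable def Ex {n : ℕ} (h : (Fin n → Bool) → ℝ) : ℝ := (∑ x, h x) / 2 ^ n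

noncomputable def K (ρ : ℝ) (a b : Bool) : ℝ := if a = b then (1 + ρ) / 2 else (1 - ρ) / 2

noncomputable def kern (ρ : ℝ) {n : ℕ} (x y : Fin n → Bool) : ℝ := ∏ i, K ρ (x i) (y i)

noncomputable def T (ρ : ℝ) {n : ℕ} (h : (Fin n → Bool) → ℝ) (x : Fin n → Bool) : ℝ :=
  ∑ y, kern ρ x y * h y

lemma K_nonneg {ρ : ℝ} (h0 : 0 ≤ ρ) (h1 : ρ ≤ 1) (a b : Bool) : 0 ≤ K ρ a b := by
  unfold K; split <;> linarith

lemma K_symm (ρ : ℝ) (a b : Bool) : K ρ a b = K ρ b a := by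
  unfold K
  simp only [eq_comm]

lemma kern_nonneg {ρ : ℝ} (h0 : 0 ≤ ρ) (h1 : ρ ≤ 1) {n : ℕ} (x y : Fin n → Bool) :
    0 ≤ kern ρ x y :=
  Finset.prod_nonneg fun i _ => K_nonneg h0 h1 _ _

/-- Sum over pi type of a product factorizes. -/
lemma sum_prod_pi {n : ℕ} (F : Fin n → Bool → ℝ) :
    ∑ y : Fin n → Bool, ∏ i, F i (y i) = ∏ i, (F i true + F i false) := by
  classical
  calc ∑ y : Fin n → Bool, ∏ i, F i (y i)
      = ∑ y ∈ Fintype.piFinset (fun _ : Fin n => (Finset.univ : Finset Bool)), ∏ i, F i (y i) := by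
        rw [Fintype.piFinset_univ]
    _ = ∏ i, ∑ b ∈ (Finset.univ : Finset Bool), F i b := Finset.sum_prod_piFinset _ _
    _ = ∏ i, (F i true + F i false) := by
        apply Finset.prod_congr rfl
        intro i _
        rw [Fintype.sum_bool]

/-- Composition of kernels. -/
lemma K_comp (σ : ℝ) (a b : Bool) :
    (∑ c : Bool, K σ a c * K σ c b) = K (σ ^ 2) a b := by
  rw [Fintype.sum_bool]
  unfold K
  cases a <;> cases b <;> simp <;> ring

lemma sum_pi_succ {n : ℕ} (F : (Fin (n + 1) → Bool) → ℝ) :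
    ∑ x, F x = ∑ b : Bool, ∑ x : Fin n → Bool, F (Fin.cons b x) := by
  rw [← (Fin.consEquiv (fun _ => Bool)).sum_comp F, Fintype.sum_prod_type]
  rfl

lemma Ex_succ {n : ℕ} (F : (Fin (n + 1) → Bool) → ℝ) :
    Ex F = (Ex (fun x => F (Fin.cons true x)) + Ex (fun x => F (Fin.cons false x))) / 2 := by
  unfold Ex
  rw [sum_pi_succ F, Fintype.sum_bool]
  rw [pow_succ]
  field_simp

lemma kern_cons (ρ : ℝ) {n : ℕ} (c b : Bool) (x y : Fin n → Bool) :
    kern ρ (Fin.cons c x) (Fin.cons b y) = K ρ c b * kern ρ x y := by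
  unfold kern
  rw [Fin.prod_univ_succ]
  simp [Fin.cons_zero, Fin.cons_succ]

lemma T_cons (ρ : ℝ) {n : ℕ} (h : (Fin (n + 1) → Bool) → ℝ) (c : Bool) (x : Fin n → Bool) :
    T ρ h (Fin.cons c x) =
      T ρ (fun y => K ρ c true * h (Fin.cons true y) + K ρ c false * h (Fin.cons false y)) x := by
  unfold T
  rw [sum_pi_succ (fun y => kern ρ (Fin.cons c x) y * h y), Fintype.sum_bool]
  simp only [kern_cons]
  rw [← Finset.sum_add_distrib]
  congr 1
  ext y
  ring


lemma Ex_nonneg {n : ℕ} {h : (Fin n → Bool) → ℝ} (hh : ∀ x, 0 ≤ h x) : 0 ≤ Ex h := by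
  unfold Ex
  exact div_nonneg (Finset.sum_nonneg fun x _ => hh x) (by positivity)

lemma Ex_mono {n : ℕ} {h g : (Fin n → Bool) → ℝ} (hh : ∀ x, h x ≤ g x) : Ex h ≤ Ex g := by
  unfold Ex
  exact div_le_div_of_nonneg_right (Finset.sum_le_sum fun x _ => hh x) (by positivity)

lemma Ex_div {n : ℕ} (h : (Fin n → Bool) → ℝ) (c : ℝ) :
    Ex (fun x => h x / c) = Ex h / c := by
  unfold Ex
  rw [← Finset.sum_div, div_div, div_div, mul_comm]

lemma Ex_add {n : ℕ} (h g : (Fin n → Bool) → ℝ) :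
    Ex (fun x => h x + g x) = Ex h + Ex g := by
  unfold Ex
  rw [Finset.sum_add_distrib, add_div]

lemma abs_rpow_eq_sq {p : ℝ} (a : ℝ) : |a| ^ p = (a ^ 2) ^ (p / 2) := by
  rw [← sq_abs, ← Real.rpow_natCast |a| 2, ← Real.rpow_mul (abs_nonneg a)]
  congr 1
  push_cast
  ring



/-- AM-GM style: if `x*y ≥ 1` with `x,y > 0` then `x + y ≥ 2`. -/
lemma two_le_add_of_one_le_mul {x y : ℝ} (hx : 0 < x) (hy : 0 < y) (h : 1 ≤ x * y) :
    2 ≤ x + y := by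
  nlinarith [sq_nonneg (x - y), sq_nonneg (x + y - 2)]

lemma L1 {q : ℝ} (hq0 : 0 ≤ q) (hq1 : q ≤ 1) {t : ℝ} (ht0 : 0 ≤ t) (ht1 : t ≤ 1) :
    2 * q * t ≤ (1 + t) ^ q - (1 - t) ^ q := by
  rcases eq_or_lt_of_le hq0 with rfl | hq0'
  · simp
  set φ : ℝ → ℝ := fun s => (1 + s) ^ q - (1 - s) ^ q - 2 * q * s with hφ
  have hder : ∀ s ∈ Set.Ioo (0 : ℝ) 1,
      HasDerivAt φ (1 * q * (1 + s) ^ (q - 1) - (-1) * q * (1 - s) ^ (q - 1) - 2 * q) s := by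
    intro s hs
    have h1 : HasDerivAt (fun s : ℝ => (1 + s) ^ q) (1 * q * (1 + s) ^ (q - 1)) s := by
      have base : HasDerivAt (fun s : ℝ => 1 + s) 1 s := (hasDerivAt_id s).const_add 1
      exact base.rpow_const (Or.inl (by nlinarith [hs.1]))
    have h2 : HasDerivAt (fun s : ℝ => (1 - s) ^ q) ((-1) * q * (1 - s) ^ (q - 1)) s := by
      have base : HasDerivAt (fun s : ℝ => 1 - s) (-1) s := (hasDerivAt_id s).const_sub 1
      exact base.rpow_const (Or.inl (by nlinarith [hs.2]))
    have h3 : HasDerivAt (fun s : ℝ => 2 * q * s) (2 * q) s := by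
      simpa using (hasDerivAt_id s).const_mul (2 * q)
    exact (h1.sub h2).sub h3
  have hmono : MonotoneOn φ (Set.Icc (0 : ℝ) 1) := by
    apply monotoneOn_of_deriv_nonneg (convex_Icc 0 1)
    · apply ContinuousOn.sub
      apply ContinuousOn.sub
      · exact (continuousOn_const.add continuousOn_id).rpow_const fun x _ => Or.inr hq0
      · exact (continuousOn_const.sub continuousOn_id).rpow_const fun x _ => Or.inr hq0
      · exact (continuousOn_const.mul continuousOn_id)
    · intro s hs
      rw [interior_Icc] at hs
      exact (hder s hs).differentiableAt.differentiableWithinAt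
    · intro s hs
      rw [interior_Icc] at hs
      rw [(hder s hs).deriv]
      have hx : (0:ℝ) < (1 + s) ^ (q - 1) := rpow_pos_of_pos (by nlinarith [hs.1]) _
      have hy : (0:ℝ) < (1 - s) ^ (q - 1) := rpow_pos_of_pos (by nlinarith [hs.2]) _
      have hxy : 1 ≤ (1 + s) ^ (q - 1) * (1 - s) ^ (q - 1) := by
        rw [← Real.mul_rpow (by nlinarith [hs.1]) (by nlinarith [hs.2])]
        apply Real.one_le_rpow_of_pos_of_le_one_of_nonpos
        · nlinarith [hs.1, hs.2]
        · nlinarith [sq_nonneg s]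
        · linarith
      have h2le := two_le_add_of_one_le_mul hx hy hxy
      nlinarith [h2le, hq0']
  have h0 : φ 0 = 0 := by simp [hφ]
  have hle : φ 0 ≤ φ t := hmono (Set.mem_Icc.mpr ⟨le_refl 0, zero_le_one⟩)
    (Set.mem_Icc.mpr ⟨ht0, ht1⟩) ht0
  rw [h0] at hle
  simp only [hφ] at hle
  linarith


lemma L2 {p : ℝ} (hp1 : 1 ≤ p) (hp2 : p ≤ 2) {t : ℝ} (ht0 : 0 ≤ t) (ht1 : t ≤ 1) :
    1 + p * (p - 1) / 2 * t ^ 2 ≤ ((1 + t) ^ p + (1 - t) ^ p) / 2 := by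
  have hp0 : (0:ℝ) < p := by linarith
  set F : ℝ → ℝ := fun s => ((1 + s) ^ p + (1 - s) ^ p) / 2 - 1 - p * (p - 1) / 2 * s ^ 2 with hF
  have hder : ∀ s ∈ Set.Ioo (0 : ℝ) 1,
      HasDerivAt F ((1 * p * (1 + s) ^ (p - 1) + (-1) * p * (1 - s) ^ (p - 1)) / 2 - 0
        - p * (p - 1) / 2 * (2 * s)) s := by
    intro s hs
    have h1 : HasDerivAt (fun s : ℝ => (1 + s) ^ p) (1 * p * (1 + s) ^ (p - 1)) s := by
      have base : HasDerivAt (fun s : ℝ => 1 + s) 1 s := (hasDerivAt_id s).const_add 1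
      exact base.rpow_const (Or.inl (by nlinarith [hs.1]))
    have h2 : HasDerivAt (fun s : ℝ => (1 - s) ^ p) ((-1) * p * (1 - s) ^ (p - 1)) s := by
      have base : HasDerivAt (fun s : ℝ => 1 - s) (-1) s := (hasDerivAt_id s).const_sub 1
      exact base.rpow_const (Or.inl (by nlinarith [hs.2]))
    have h3 : HasDerivAt (fun s : ℝ => p * (p - 1) / 2 * s ^ 2) (p * (p - 1) / 2 * (2 * s)) s := by
      have := (hasDerivAt_pow 2 s).const_mul (p * (p - 1) / 2)
      simpa using this
    rw [hF]
    exact (((h1.add h2).div_const 2).sub (hasDerivAt_const s 1)).sub h3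
  have hmono : MonotoneOn F (Set.Icc (0 : ℝ) 1) := by
    apply monotoneOn_of_deriv_nonneg (convex_Icc 0 1)
    · apply ContinuousOn.sub
      apply ContinuousOn.sub
      · apply ContinuousOn.div_const
        apply ContinuousOn.add
        · exact (continuousOn_const.add continuousOn_id).rpow_const fun x _ => Or.inr hp0.le
        · exact (continuousOn_const.sub continuousOn_id).rpow_const fun x _ => Or.inr hp0.le
      · exact continuousOn_const
      · exact continuousOn_const.mul (continuousOn_pow 2)
    · intro s hs
      rw [interior_Icc] at hs
      exact (hder s hs).differentiableAt.differentiableWithinAt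
    · intro s hs
      rw [interior_Icc] at hs
      rw [(hder s hs).deriv]
      have hq0 : (0:ℝ) ≤ p - 1 := by linarith
      have hq1 : p - 1 ≤ 1 := by linarith
      have := L1 hq0 hq1 hs.1.le hs.2.le
      nlinarith [this, hp0]
  have h0 : F 0 = 0 := by simp [hF]
  have hle : F 0 ≤ F t := hmono (Set.mem_Icc.mpr ⟨le_refl 0, zero_le_one⟩)
    (Set.mem_Icc.mpr ⟨ht0, ht1⟩) ht0
  rw [h0] at hle
  simp only [hF] at hle
  linarith

lemma twoPointNorm {ρ : ℝ} (h0 : 0 ≤ ρ) (h1 : ρ ≤ 1) {t : ℝ} (ht0 : 0 ≤ t) (ht1 : t ≤ 1) :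
    (1 + ρ ^ 2 * t ^ 2) ^ ((1 + ρ ^ 2) / 2)
      ≤ ((1 + t) ^ (1 + ρ ^ 2) + (1 - t) ^ (1 + ρ ^ 2)) / 2 := by
  set p : ℝ := 1 + ρ ^ 2 with hp
  have hp1 : 1 ≤ p := by nlinarith
  have hp2 : p ≤ 2 := by nlinarith
  have hB : (1 + ρ ^ 2 * t ^ 2) ^ (p / 2) ≤ 1 + p / 2 * (ρ ^ 2 * t ^ 2) :=
    rpow_one_add_le_one_add_mul_self (by nlinarith [mul_nonneg (sq_nonneg ρ) (sq_nonneg t)]) (by positivity) (by linarith)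
  have harith : 1 + p / 2 * (ρ ^ 2 * t ^ 2) = 1 + p * (p - 1) / 2 * t ^ 2 := by
    rw [hp]; ring
  have := L2 hp1 hp2 ht0 ht1
  calc (1 + ρ ^ 2 * t ^ 2) ^ (p / 2) ≤ 1 + p / 2 * (ρ ^ 2 * t ^ 2) := hB
    _ = 1 + p * (p - 1) / 2 * t ^ 2 := harith
    _ ≤ ((1 + t) ^ p + (1 - t) ^ p) / 2 := this

lemma twoPointAux {ρ : ℝ} (h0 : 0 ≤ ρ) (h1 : ρ ≤ 1) {a b : ℝ} (hb : 0 ≤ b) (hba : b ≤ a) :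
    (a ^ 2 + ρ ^ 2 * b ^ 2) ^ ((1 + ρ ^ 2) / 2)
      ≤ ((a + b) ^ (1 + ρ ^ 2) + (a - b) ^ (1 + ρ ^ 2)) / 2 := by
  set p : ℝ := 1 + ρ ^ 2 with hp
  have hp0 : (0:ℝ) < p := by positivity
  rcases eq_or_lt_of_le (hb.trans hba) with hA | hA
  · have hb0 : b = 0 := le_antisymm (hA ▸ hba) hb
    rw [← hA, hb0]
    norm_num
    rw [Real.zero_rpow (by positivity), Real.zero_rpow hp0.ne']
  · -- a > 0
    set t : ℝ := b / a with htdef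
    have ht0 : 0 ≤ t := div_nonneg hb hA.le
    have ht1 : t ≤ 1 := (div_le_one hA).mpr hba
    have key := twoPointNorm h0 h1 ht0 ht1
    have hmul := mul_le_mul_of_nonneg_left key (le_of_lt (Real.rpow_pos_of_pos hA p))
    -- LHS transformation
    have hL : a ^ p * (1 + ρ ^ 2 * t ^ 2) ^ (p / 2) = (a ^ 2 + ρ ^ 2 * b ^ 2) ^ (p / 2) := by
      have h1' : a ^ p = ((a ^ 2 : ℝ)) ^ (p / 2) := by
        rw [← Real.rpow_natCast a 2, ← Real.rpow_mul hA.le]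
        congr 1
        push_cast
        ring
      rw [h1', ← Real.mul_rpow (by positivity) (by positivity)]
      congr 1
      rw [htdef]
      field_simp
    have hR : a ^ p * (((1 + t) ^ p + (1 - t) ^ p) / 2)
        = ((a + b) ^ p + (a - b) ^ p) / 2 := by
      have e1 : a ^ p * (1 + t) ^ p = (a + b) ^ p := by
        rw [← Real.mul_rpow hA.le (by linarith)]
        congr 1
        rw [htdef]
        field_simp
      have e2 : a ^ p * (1 - t) ^ p = (a - b) ^ p := by
        rw [← Real.mul_rpow hA.le (by linarith [ht1])]
        congr 1
        rw [htdef]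
        field_simp
      field_simp
      rw [mul_add, e1, e2]
    rw [hL, hR] at hmul
    exact hmul

lemma twoPoint {ρ : ℝ} (h0 : 0 ≤ ρ) (h1 : ρ ≤ 1) (a b : ℝ) :
    (a ^ 2 + ρ ^ 2 * b ^ 2) ^ ((1 + ρ ^ 2) / 2)
      ≤ (|a + b| ^ (1 + ρ ^ 2) + |a - b| ^ (1 + ρ ^ 2)) / 2 := by
  set p : ℝ := 1 + ρ ^ 2 with hp
  have habs : (a + b) * (a - b) ≤ |a + b| * |a - b| := by
    rw [← abs_mul]; exact le_abs_self _
  have hsq1 : |a + b| ^ 2 = (a + b) ^ 2 := sq_abs _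
  have hsq2 : |a - b| ^ 2 = (a - b) ^ 2 := sq_abs _
  have hrho : ρ ^ 2 ≤ 1 := by nlinarith
  rcases le_total (|a - b|) (|a + b|) with hc | hc
  · set a' : ℝ := (|a + b| + |a - b|) / 2 with ha'
    set b' : ℝ := (|a + b| - |a - b|) / 2 with hb'
    have hb'0 : 0 ≤ b' := by rw [hb']; linarith
    have hba' : b' ≤ a' := by rw [ha', hb']; linarith [abs_nonneg (a - b)]
    have haux := twoPointAux h0 h1 hb'0 hba'
    have e1 : a' + b' = |a + b| := by rw [ha', hb']; ring
    have e2 : a' - b' = |a - b| := by rw [ha', hb']; ring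
    rw [e1, e2] at haux
    refine le_trans (Real.rpow_le_rpow (by positivity) ?_ (by positivity)) haux
    have expand : a' ^ 2 + ρ ^ 2 * b' ^ 2 - (a ^ 2 + ρ ^ 2 * b ^ 2)
        = (1 - ρ ^ 2) * (|a + b| * |a - b| - (a + b) * (a - b)) / 2 := by
      rw [ha', hb']
      linear_combination ((1 + ρ ^ 2) / 4) * hsq1 + ((1 + ρ ^ 2) / 4) * hsq2
    have hprod : 0 ≤ (1 - ρ ^ 2) * (|a + b| * |a - b| - (a + b) * (a - b)) :=
      mul_nonneg (by linarith) (by linarith)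
    linarith
  · set a' : ℝ := (|a - b| + |a + b|) / 2 with ha'
    set b' : ℝ := (|a - b| - |a + b|) / 2 with hb'
    have hb'0 : 0 ≤ b' := by rw [hb']; linarith
    have hba' : b' ≤ a' := by rw [ha', hb']; linarith [abs_nonneg (a + b)]
    have haux := twoPointAux h0 h1 hb'0 hba'
    have e1 : a' + b' = |a - b| := by rw [ha', hb']; ring
    have e2 : a' - b' = |a + b| := by rw [ha', hb']; ring
    rw [e1, e2] at haux
    refine le_trans (Real.rpow_le_rpow (by positivity) ?_ (by positivity)) (haux.trans ?_)
    · have expand : a' ^ 2 + ρ ^ 2 * b' ^ 2 - (a ^ 2 + ρ ^ 2 * b ^ 2)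
          = (1 - ρ ^ 2) * (|a + b| * |a - b| - (a + b) * (a - b)) / 2 := by
        rw [ha', hb']
        linear_combination ((1 + ρ ^ 2) / 4) * hsq1 + ((1 + ρ ^ 2) / 4) * hsq2
      have hprod : 0 ≤ (1 - ρ ^ 2) * (|a + b| * |a - b| - (a + b) * (a - b)) :=
        mul_nonneg (by linarith) (by linarith)
      linarith
    · rw [add_comm]

lemma Ex_mul {n : ℕ} (c : ℝ) (h : (Fin n → Bool) → ℝ) :
    Ex (fun x => c * h x) = c * Ex h := by
  unfold Ex
  rw [← Finset.mul_sum, mul_div_assoc]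

/-- Concavity of `x ^ r` for `r ≤ 1`, two-point weighted form. -/
lemma concave_pair {r lam s t : ℝ} (hr0 : 0 < r) (hr1 : r ≤ 1) (hl0 : 0 < lam)
    (hl1 : lam < 1) (hs : 0 ≤ s) (ht : 0 ≤ t) :
    lam ^ (1 - r) * s ^ r + (1 - lam) ^ (1 - r) * t ^ r ≤ (s + t) ^ r := by
  have h1l : (0:ℝ) < 1 - lam := by linarith
  have key := Real.arith_mean_le_rpow_mean (Finset.univ : Finset Bool)
    (fun b => cond b lam (1 - lam)) (fun b => cond b ((s / lam) ^ r) ((t / (1 - lam)) ^ r))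
    (fun b _ => by cases b <;> simp <;> linarith)
    (by rw [Fintype.sum_bool]; simp)
    (fun b _ => by cases b <;> simp <;> positivity)
    (p := 1 / r) (by rw [le_div_iff₀ hr0]; linarith)
  rw [Fintype.sum_bool, Fintype.sum_bool] at key
  simp only [cond_true, cond_false] at key
  have e1 : ((s / lam) ^ r) ^ (1 / r) = s / lam := by
    rw [← Real.rpow_mul (by positivity)]
    rw [mul_one_div, div_self hr0.ne', Real.rpow_one]
  have e2 : ((t / (1 - lam)) ^ r) ^ (1 / r) = t / (1 - lam) := by
    rw [← Real.rpow_mul (by positivity)]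
    rw [mul_one_div, div_self hr0.ne', Real.rpow_one]
  rw [e1, e2] at key
  have e3 : lam * (s / lam) + (1 - lam) * (t / (1 - lam)) = s + t := by
    field_simp
  rw [e3] at key
  have e4 : (1 / (1 / r)) = r := by field_simp
  rw [e4] at key
  have e5 : lam * (s / lam) ^ r = lam ^ (1 - r) * s ^ r := by
    rw [Real.div_rpow hs hl0.le]
    rw [eq_comm, Real.rpow_sub hl0, Real.rpow_one]
    field_simp
  have e6 : (1 - lam) * (t / (1 - lam)) ^ r = (1 - lam) ^ (1 - r) * t ^ r := by
    rw [Real.div_rpow ht h1l.le]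
    rw [eq_comm, Real.rpow_sub h1l, Real.rpow_one]
    field_simp
  rw [e5, e6] at key
  exact key

/-- Superadditivity of the `r`-norm for `r ≤ 1` (reverse Minkowski). -/
lemma superadd {n : ℕ} {r : ℝ} (hr0 : 0 < r) (hr1 : r ≤ 1)
    (H1 H2 : (Fin n → Bool) → ℝ) (h1 : ∀ x, 0 ≤ H1 x) (h2 : ∀ x, 0 ≤ H2 x) :
    (Ex fun x => H1 x ^ r) ^ (1 / r) + (Ex fun x => H2 x ^ r) ^ (1 / r)
      ≤ (Ex fun x => (H1 x + H2 x) ^ r) ^ (1 / r) := by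
  set A : ℝ := (Ex fun x => H1 x ^ r) ^ (1 / r) with hA
  set B : ℝ := (Ex fun x => H2 x ^ r) ^ (1 / r) with hB
  have hEx1 : 0 ≤ Ex fun x => H1 x ^ r := Ex_nonneg fun x => Real.rpow_nonneg (h1 x) _
  have hEx2 : 0 ≤ Ex fun x => H2 x ^ r := Ex_nonneg fun x => Real.rpow_nonneg (h2 x) _
  have hExS : 0 ≤ Ex fun x => (H1 x + H2 x) ^ r :=
    Ex_nonneg fun x => Real.rpow_nonneg (by linarith [h1 x, h2 x]) _
  have hA0 : 0 ≤ A := by rw [hA]; positivity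
  have hB0 : 0 ≤ B := by rw [hB]; positivity
  have hmono1 : Ex (fun x => H1 x ^ r) ≤ Ex fun x => (H1 x + H2 x) ^ r :=
    Ex_mono fun x => Real.rpow_le_rpow (h1 x) (by linarith [h2 x]) hr0.le
  have hmono2 : Ex (fun x => H2 x ^ r) ≤ Ex fun x => (H1 x + H2 x) ^ r :=
    Ex_mono fun x => Real.rpow_le_rpow (h2 x) (by linarith [h1 x]) hr0.le
  rcases eq_or_lt_of_le hA0 with hA' | hA'
  · rw [← hA']
    rw [zero_add, hB]
    exact Real.rpow_le_rpow hEx2 hmono2 (by positivity)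
  rcases eq_or_lt_of_le hB0 with hB' | hB'
  · rw [← hB']
    rw [add_zero, hA]
    exact Real.rpow_le_rpow hEx1 hmono1 (by positivity)
  -- main case : A, B > 0
  have hAB : 0 < A + B := by linarith
  set lam : ℝ := A / (A + B) with hlam
  have hl0 : 0 < lam := by positivity
  have hl1 : lam < 1 := by
    rw [hlam, div_lt_one hAB]; linarith
  have hAr : A ^ r = Ex fun x => H1 x ^ r := by
    rw [hA, ← Real.rpow_mul hEx1, one_div, inv_mul_cancel₀ hr0.ne', Real.rpow_one]
  have hBr : B ^ r = Ex fun x => H2 x ^ r := by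
    rw [hB, ← Real.rpow_mul hEx2, one_div, inv_mul_cancel₀ hr0.ne', Real.rpow_one]
  have hpoint : ∀ x, lam ^ (1 - r) * H1 x ^ r + (1 - lam) ^ (1 - r) * H2 x ^ r
      ≤ (H1 x + H2 x) ^ r := fun x => concave_pair hr0 hr1 hl0 hl1 (h1 x) (h2 x)
  have hExpoint : lam ^ (1 - r) * (Ex fun x => H1 x ^ r)
      + (1 - lam) ^ (1 - r) * (Ex fun x => H2 x ^ r)
      ≤ Ex fun x => (H1 x + H2 x) ^ r := by
    calc lam ^ (1 - r) * (Ex fun x => H1 x ^ r)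
        + (1 - lam) ^ (1 - r) * (Ex fun x => H2 x ^ r)
        = Ex (fun x => lam ^ (1 - r) * H1 x ^ r + (1 - lam) ^ (1 - r) * H2 x ^ r) := by
          rw [Ex_add, Ex_mul, Ex_mul]
      _ ≤ Ex fun x => (H1 x + H2 x) ^ r := Ex_mono hpoint
  have hcomb : (A + B) ^ r ≤ Ex fun x => (H1 x + H2 x) ^ r := by
    have e1 : lam ^ (1 - r) * A ^ r = A / (A + B) ^ (1 - r) := by
      rw [hlam, Real.div_rpow hA0 hAB.le]
      rw [div_mul_eq_mul_div, ← Real.rpow_add hA']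
      rw [sub_add_cancel, Real.rpow_one]
    have e2 : (1 - lam) ^ (1 - r) * B ^ r = B / (A + B) ^ (1 - r) := by
      have : 1 - lam = B / (A + B) := by rw [hlam]; field_simp; ring
      rw [this, Real.div_rpow hB0 hAB.le]
      rw [div_mul_eq_mul_div, ← Real.rpow_add hB']
      rw [sub_add_cancel, Real.rpow_one]
    have e3 : (A + B) ^ r = A / (A + B) ^ (1 - r) + B / (A + B) ^ (1 - r) := by
      rw [← add_div, eq_comm, div_eq_iff (by positivity : ((A + B) ^ (1 - r) : ℝ) ≠ 0)]
      rw [← Real.rpow_add hAB, add_sub_cancel, Real.rpow_one]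
    rw [e3, ← e1, ← e2, hAr, hBr]
    exact hExpoint
  calc A + B = ((A + B) ^ r) ^ (1 / r) := by
        rw [← Real.rpow_mul hAB.le, mul_one_div, div_self hr0.ne', Real.rpow_one]
    _ ≤ (Ex fun x => (H1 x + H2 x) ^ r) ^ (1 / r) :=
        Real.rpow_le_rpow (by positivity) hcomb (by positivity)


/-- Reverse Minkowski step. -/
lemma revMink {n : ℕ} {p : ℝ} (hp1 : 1 ≤ p) (hp2 : p ≤ 2) (u v : (Fin n → Bool) → ℝ) :
    ((Ex fun x => |u x| ^ p) ^ (2 / p) + (Ex fun x => |v x| ^ p) ^ (2 / p)) / 2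
      ≤ (Ex fun x => ((u x ^ 2 + v x ^ 2) / 2) ^ (p / 2)) ^ (2 / p) := by
  have hp0 : (0:ℝ) < p := by linarith
  set r : ℝ := p / 2 with hr
  have hr0 : 0 < r := by rw [hr]; linarith
  have hr1 : r ≤ 1 := by rw [hr]; linarith
  have h2p : 2 / p = 1 / r := by rw [hr]; field_simp
  have hsup := superadd hr0 hr1 (fun x => u x ^ 2) (fun x => v x ^ 2)
    (fun x => sq_nonneg _) (fun x => sq_nonneg _)
  have e1 : (Ex fun x => |u x| ^ p) = Ex fun x => (u x ^ 2) ^ r := by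
    congr 1
    funext x
    rw [abs_rpow_eq_sq]
  have e2 : (Ex fun x => |v x| ^ p) = Ex fun x => (v x ^ 2) ^ r := by
    congr 1
    funext x
    rw [abs_rpow_eq_sq]
  have e3 : (Ex fun x => ((u x ^ 2 + v x ^ 2) / 2) ^ (p / 2))
      = (Ex fun x => (u x ^ 2 + v x ^ 2) ^ r) / 2 ^ r := by
    rw [← Ex_div]
    congr 1
    funext x
    rw [Real.div_rpow (by positivity) (by norm_num), hr]
  have e4 : ((Ex fun x => (u x ^ 2 + v x ^ 2) ^ r) / 2 ^ r) ^ (2 / p)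
      = (Ex fun x => (u x ^ 2 + v x ^ 2) ^ r) ^ (1 / r) / 2 := by
    have hnonneg : 0 ≤ Ex fun x => (u x ^ 2 + v x ^ 2) ^ r :=
      Ex_nonneg fun x => Real.rpow_nonneg (by positivity) _
    rw [h2p, Real.div_rpow hnonneg (by positivity)]
    congr 1
    rw [← Real.rpow_mul (by norm_num : (0:ℝ) ≤ 2), mul_one_div, div_self hr0.ne', Real.rpow_one]
  rw [e1, e2, e3, e4, h2p]
  linarith [hsup]

theorem hc {n : ℕ} (ρ : ℝ) (h0 : 0 ≤ ρ) (h1 : ρ ≤ 1) (h : (Fin n → Bool) → ℝ) :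
    Ex (fun x => T ρ h x ^ 2) ≤ (Ex fun x => |h x| ^ (1 + ρ ^ 2)) ^ (2 / (1 + ρ ^ 2)) := by
  have hp1 : 1 ≤ 1 + ρ ^ 2 := by nlinarith
  have hp2 : 1 + ρ ^ 2 ≤ 2 := by nlinarith
  have hp0 : (0:ℝ) < 1 + ρ ^ 2 := by positivity
  induction n with
  | zero =>
    have hT : ∀ x : Fin 0 → Bool, T ρ h x = h default := by
      intro x
      unfold T kern
      rw [Fintype.sum_unique]
      simp
      exact congrArg h (Subsingleton.elim _ _)
    have hEx : ∀ F : (Fin 0 → Bool) → ℝ, Ex F = F default := by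
      intro F
      unfold Ex
      rw [Fintype.sum_unique]
      norm_num
      exact congrArg F (Subsingleton.elim _ _)
    rw [hEx, hEx, hT]
    have e : ((|h default| ^ ((1:ℝ) + ρ ^ 2)) ^ (2 / (1 + ρ ^ 2))) = h default ^ 2 := by
      rw [← Real.rpow_mul (abs_nonneg _)]
      rw [show ((1:ℝ) + ρ ^ 2) * (2 / (1 + ρ ^ 2)) = ((2:ℕ):ℝ) by push_cast; field_simp]
      rw [Real.rpow_natCast, sq_abs]
    rw [e]
  | succ n ih =>
    set p : ℝ := 1 + ρ ^ 2 with hp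
    -- split of h along the first coordinate
    have key1 : ∀ c : Bool, Ex (fun x : Fin n → Bool => T ρ h (Fin.cons c x) ^ 2)
        ≤ (Ex fun x : Fin n → Bool =>
            |K ρ c true * h (Fin.cons true x) + K ρ c false * h (Fin.cons false x)| ^ p)
          ^ (2 / p) := by
      intro c
      have e : (fun x : Fin n → Bool => T ρ h (Fin.cons c x) ^ 2)
          = fun x => (T ρ (fun y => K ρ c true * h (Fin.cons true y)
              + K ρ c false * h (Fin.cons false y)) x) ^ 2 := by
        funext x
        rw [T_cons]
      rw [e]
      exact ih _
    have hsplit : Ex (fun x => T ρ h x ^ 2)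
        = (Ex (fun x : Fin n → Bool => T ρ h (Fin.cons true x) ^ 2)
          + Ex (fun x : Fin n → Bool => T ρ h (Fin.cons false x) ^ 2)) / 2 :=
      Ex_succ _
    set Gt : (Fin n → Bool) → ℝ :=
      fun x => K ρ true true * h (Fin.cons true x) + K ρ true false * h (Fin.cons false x)
      with hGt
    set Gf : (Fin n → Bool) → ℝ :=
      fun x => K ρ false true * h (Fin.cons true x) + K ρ false false * h (Fin.cons false x)
      with hGf
    have hrm := revMink hp1 hp2 Gt Gf
    have hpoint : ∀ x : Fin n → Bool, ((Gt x ^ 2 + Gf x ^ 2) / 2) ^ (p / 2)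
        ≤ (|h (Fin.cons true x)| ^ p + |h (Fin.cons false x)| ^ p) / 2 := by
      intro x
      set a : ℝ := (h (Fin.cons true x) + h (Fin.cons false x)) / 2 with ha
      set b : ℝ := (h (Fin.cons true x) - h (Fin.cons false x)) / 2 with hb
      have hKtt : K ρ true true = (1 + ρ) / 2 := by simp [K]
      have hKtf : K ρ true false = (1 - ρ) / 2 := by simp [K]
      have hKft : K ρ false true = (1 - ρ) / 2 := by simp [K]
      have hKff : K ρ false false = (1 + ρ) / 2 := by simp [K]
      have ebase : (Gt x ^ 2 + Gf x ^ 2) / 2 = a ^ 2 + ρ ^ 2 * b ^ 2 := by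
        rw [hGt, hGf, ha, hb, hKtt, hKtf, hKft, hKff]
        ring
      have eu : h (Fin.cons true x) = a + b := by rw [ha, hb]; ring
      have ev : h (Fin.cons false x) = a - b := by rw [ha, hb]; ring
      rw [ebase, eu, ev]
      have := twoPoint h0 h1 a b
      calc (a ^ 2 + ρ ^ 2 * b ^ 2) ^ (p / 2)
          = (a ^ 2 + ρ ^ 2 * b ^ 2) ^ ((1 + ρ ^ 2) / 2) := by rw [hp]
        _ ≤ (|a + b| ^ (1 + ρ ^ 2) + |a - b| ^ (1 + ρ ^ 2)) / 2 := this
        _ = (|a + b| ^ p + |a - b| ^ p) / 2 := by rw [hp]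
    have hfin : Ex (fun x : Fin n → Bool =>
          (|h (Fin.cons true x)| ^ p + |h (Fin.cons false x)| ^ p) / 2)
        = Ex fun x : Fin (n + 1) → Bool => |h x| ^ p := by
      rw [Ex_succ (fun x : Fin (n + 1) → Bool => |h x| ^ p)]
      rw [Ex_div, Ex_add]
    calc Ex (fun x => T ρ h x ^ 2)
        = (Ex (fun x : Fin n → Bool => T ρ h (Fin.cons true x) ^ 2)
          + Ex (fun x : Fin n → Bool => T ρ h (Fin.cons false x) ^ 2)) / 2 := hsplit
      _ ≤ ((Ex fun x => |Gt x| ^ p) ^ (2 / p) + (Ex fun x => |Gf x| ^ p) ^ (2 / p)) / 2 := by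
          have k1 : (Ex fun x : Fin n → Bool => T ρ h (Fin.cons true x) ^ 2)
              ≤ (Ex fun x => |Gt x| ^ p) ^ (2 / p) := key1 true
          have k2 : (Ex fun x : Fin n → Bool => T ρ h (Fin.cons false x) ^ 2)
              ≤ (Ex fun x => |Gf x| ^ p) ^ (2 / p) := key1 false
          linarith
      _ ≤ (Ex fun x => ((Gt x ^ 2 + Gf x ^ 2) / 2) ^ (p / 2)) ^ (2 / p) := hrm
      _ ≤ (Ex fun x : Fin n → Bool =>
            (|h (Fin.cons true x)| ^ p + |h (Fin.cons false x)| ^ p) / 2) ^ (2 / p) := by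
          apply Real.rpow_le_rpow
          · exact Ex_nonneg fun x => Real.rpow_nonneg (by positivity) _
          · exact Ex_mono hpoint
          · positivity
      _ = (Ex fun x : Fin (n + 1) → Bool => |h x| ^ p) ^ (2 / p) := by rw [hfin]

lemma kern_comp {n : ℕ} (σ : ℝ) (a b : Fin n → Bool) :
    ∑ x : Fin n → Bool, kern σ x a * kern σ x b = kern (σ ^ 2) a b := by
  unfold kern
  have e : ∀ x : Fin n → Bool, (∏ i, K σ (x i) (a i)) * ∏ i, K σ (x i) (b i)
      = ∏ i, (fun i c => K σ (a i) c * K σ c (b i)) i (x i) := by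
    intro x
    rw [← Finset.prod_mul_distrib]
    apply Finset.prod_congr rfl
    intro i _
    rw [K_symm σ (x i) (a i)]
  calc ∑ x : Fin n → Bool, (∏ i, K σ (x i) (a i)) * ∏ i, K σ (x i) (b i)
      = ∑ x : Fin n → Bool, ∏ i, (fun i c => K σ (a i) c * K σ c (b i)) i (x i) := by
        apply Finset.sum_congr rfl
        intro x _
        exact e x
    _ = ∏ i, (K σ (a i) true * K σ true (b i) + K σ (a i) false * K σ false (b i)) :=
        sum_prod_pi (fun i c => K σ (a i) c * K σ c (b i))
    _ = ∏ i, K (σ ^ 2) (a i) (b i) := by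
        apply Finset.prod_congr rfl
        intro i _
        rw [← K_comp σ (a i) (b i), Fintype.sum_bool]

lemma sum_mul_T {n : ℕ} (σ : ℝ) (u w : (Fin n → Bool) → ℝ) :
    ∑ x : Fin n → Bool, u x * T (σ ^ 2) w x
      = ∑ x : Fin n → Bool, T σ u x * T σ w x := by
  have mid : ∀ x y : Fin n → Bool,
      ∑ c : Fin n → Bool, (kern σ c x * u x) * (kern σ c y * w y)
        = u x * w y * kern (σ ^ 2) x y := by
    intro x y
    rw [← kern_comp σ x y, Finset.mul_sum]
    apply Finset.sum_congr rfl
    intro c _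
    ring
  have rhs : ∑ x : Fin n → Bool, T σ u x * T σ w x
      = ∑ x : Fin n → Bool, ∑ y : Fin n → Bool, u x * w y * kern (σ ^ 2) x y := by
    unfold T
    calc ∑ c : Fin n → Bool, (∑ x, kern σ c x * u x) * (∑ y, kern σ c y * w y)
        = ∑ c : Fin n → Bool, ∑ x, ∑ y, (kern σ c x * u x) * (kern σ c y * w y) := by
          apply Finset.sum_congr rfl
          intro c _
          rw [Finset.sum_mul_sum]
      _ = ∑ x : Fin n → Bool, ∑ c, ∑ y, (kern σ c x * u x) * (kern σ c y * w y) :=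
          Finset.sum_comm
      _ = ∑ x : Fin n → Bool, ∑ y, ∑ c, (kern σ c x * u x) * (kern σ c y * w y) := by
          apply Finset.sum_congr rfl
          intro x _
          exact Finset.sum_comm
      _ = ∑ x : Fin n → Bool, ∑ y, u x * w y * kern (σ ^ 2) x y := by
          apply Finset.sum_congr rfl
          intro x _
          apply Finset.sum_congr rfl
          intro y _
          exact mid x y
  rw [rhs]
  unfold T
  apply Finset.sum_congr rfl
  intro x _
  rw [Finset.mul_sum]
  apply Finset.sum_congr rfl
  intro y _
  ring

lemma Ex_mul_T {n : ℕ} (σ : ℝ) (u w : (Fin n → Bool) → ℝ) :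
    Ex (fun x => u x * T (σ ^ 2) w x) = Ex fun x => T σ u x * T σ w x := by
  unfold Ex
  rw [sum_mul_T]

lemma Ex_cauchy {n : ℕ} (u w : (Fin n → Bool) → ℝ) :
    (Ex fun x => u x * w x) ^ 2 ≤ (Ex fun x => u x ^ 2) * Ex fun x => w x ^ 2 := by
  unfold Ex
  have hd : ((2:ℝ) ^ n) * 2 ^ n = (2 ^ n) ^ 2 := by ring
  rw [div_pow, div_mul_div_comm, hd]
  exact div_le_div_of_nonneg_right (Finset.sum_mul_sq_le_sq_mul_sq _ u w) (by positivity)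

end SSE

theorem stmt2 {n k : ℕ} (ε : ℝ) (hε0 : 0 ≤ ε) (hε1 : ε ≤ 1 / 2)
    (f g : (Fin n → Bool) → (Fin k → Bool))
    (hf : ∀ z, outDist f z = 1 / 2 ^ k)
    (hg : ∀ z, outDist g z = 1 / 2 ^ k) :
    prPair ε (fun x y => f x = g y) ≤ (2 : ℝ) ^ (-((k : ℝ) * ε) / (1 - ε)) := by
  classical
  set ρ : ℝ := 1 - 2 * ε with hρ
  have hρ0 : 0 ≤ ρ := by rw [hρ]; linarith
  have hρ1 : ρ ≤ 1 := by rw [hρ]; linarith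
  have h1ε : (0:ℝ) < 1 - ε := by linarith
  have h1ρ : (0:ℝ) < 1 + ρ := by rw [hρ]; linarith
  set σ : ℝ := Real.sqrt ρ with hσ
  have hσ0 : 0 ≤ σ := Real.sqrt_nonneg _
  have hσ2 : σ ^ 2 = ρ := Real.sq_sqrt hρ0
  have hσ1 : σ ≤ 1 := by nlinarith [sq_nonneg (σ - 1)]
  -- the weight in terms of the kernel
  have hweight : ∀ x y : Fin n → Bool, pairWeight ε x y = SSE.kern ρ x y / 2 ^ n := by
    intro x y
    unfold pairWeight SSE.kern
    calc (∏ i, if x i = y i then (1 - ε) / 2 else ε / 2)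
        = ∏ i, (SSE.K ρ (x i) (y i) / 2) := by
          apply Finset.prod_congr rfl
          intro i _
          unfold SSE.K
          split_ifs
          · rw [hρ]; ring
          · rw [hρ]; ring
      _ = (∏ i, SSE.K ρ (x i) (y i)) / ∏ _i : Fin n, (2:ℝ) := Finset.prod_div_distrib _ _
      _ = (∏ i, SSE.K ρ (x i) (y i)) / 2 ^ n := by
          rw [Finset.prod_const, Finset.card_univ, Fintype.card_fin]
  set A : (Fin k → Bool) → (Fin n → Bool) → ℝ := fun z x => if f x = z then 1 else 0 with hA
  set B : (Fin k → Bool) → (Fin n → Bool) → ℝ := fun z y => if g y = z then 1 else 0 with hB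
  -- expansion of prPair
  have hz : ∀ z, ∑ x : Fin n → Bool, ∑ y : Fin n → Bool, A z x * B z y * (SSE.kern ρ x y / 2 ^ n)
      = SSE.Ex fun x => A z x * SSE.T ρ (B z) x := by
    intro z
    unfold SSE.Ex SSE.T
    rw [Finset.sum_div]
    apply Finset.sum_congr rfl
    intro x _
    beta_reduce
    rw [Finset.mul_sum, Finset.sum_div]
    apply Finset.sum_congr rfl
    intro y _
    ring
  have hpr : prPair ε (fun x y => f x = g y)
      = ∑ z : Fin k → Bool, SSE.Ex fun x => A z x * SSE.T ρ (B z) x := by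
    unfold prPair
    refine Eq.trans (b := ∑ x : Fin n → Bool, ∑ y : Fin n → Bool, ∑ z : Fin k → Bool,
        A z x * B z y * (SSE.kern ρ x y / 2 ^ n)) ?_ ?_
    · apply Finset.sum_congr rfl
      intro x _
      apply Finset.sum_congr rfl
      intro y _
      split_ifs with hxy
      · rw [hweight x y]
        have e0 : ∀ z : Fin k → Bool, A z x * B z y * (SSE.kern ρ x y / 2 ^ n)
            = if z = f x then SSE.kern ρ x y / 2 ^ n else 0 := by
          intro z
          simp only [hA, hB]
          by_cases h1 : z = f x
          · rw [if_pos h1, if_pos h1.symm]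
            have h2 : g y = z := by rw [h1, ← hxy]
            rw [if_pos h2]
            ring
          · rw [if_neg h1, if_neg (fun hh => h1 hh.symm : ¬ f x = z)]
            ring
        rw [Finset.sum_congr rfl fun z _ => e0 z]
        rw [Finset.sum_ite_eq' Finset.univ (f x) (fun _ => SSE.kern ρ x y / 2 ^ n)]
        simp
      · symm
        apply Finset.sum_eq_zero
        intro z _
        simp only [hA, hB]
        by_cases h1 : f x = z
        · have h2 : ¬ (g y = z) := fun hh => hxy (h1.trans hh.symm)
          rw [if_neg h2]
          ring
        · rw [if_neg h1]
          ring
    · calc ∑ x : Fin n → Bool, ∑ y : Fin n → Bool, ∑ z : Fin k → Bool,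
            A z x * B z y * (SSE.kern ρ x y / 2 ^ n)
          = ∑ x : Fin n → Bool, ∑ z : Fin k → Bool, ∑ y : Fin n → Bool,
              A z x * B z y * (SSE.kern ρ x y / 2 ^ n) := by
            apply Finset.sum_congr rfl
            intro x _
            exact Finset.sum_comm
        _ = ∑ z : Fin k → Bool, ∑ x : Fin n → Bool, ∑ y : Fin n → Bool,
              A z x * B z y * (SSE.kern ρ x y / 2 ^ n) := Finset.sum_comm
        _ = ∑ z : Fin k → Bool, SSE.Ex fun x => A z x * SSE.T ρ (B z) x := by
            apply Finset.sum_congr rfl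
            intro z _
            exact hz z
  -- uniformity of outputs
  have hAex : ∀ z, (SSE.Ex fun x => |A z x| ^ (1 + ρ)) = 1 / 2 ^ k := by
    intro z
    have e : (fun x : Fin n → Bool => |A z x| ^ (1 + ρ)) = fun x => A z x := by
      funext x
      rw [hA]
      by_cases hfx : f x = z
      · simp [hfx, Real.one_rpow]
      · simp [hfx, Real.zero_rpow (by positivity : (1:ℝ) + ρ ≠ 0)]
    rw [e]
    exact hf z
  have hBex : ∀ z, (SSE.Ex fun x => |B z x| ^ (1 + ρ)) = 1 / 2 ^ k := by
    intro z
    have e : (fun x : Fin n → Bool => |B z x| ^ (1 + ρ)) = fun x => B z x := by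
      funext x
      rw [hB]
      by_cases hgx : g x = z
      · simp [hgx, Real.one_rpow]
      · simp [hgx, Real.zero_rpow (by positivity : (1:ℝ) + ρ ≠ 0)]
    rw [e]
    exact hg z
  set C : ℝ := ((1:ℝ) / 2 ^ k) ^ (2 / (1 + ρ)) with hC
  have hC0 : 0 < C := Real.rpow_pos_of_pos (by positivity) _
  have hTA : ∀ z, (SSE.Ex fun x => SSE.T σ (A z) x ^ 2) ≤ C := by
    intro z
    have h := SSE.hc σ hσ0 hσ1 (A z)
    rw [hσ2] at h
    rw [hAex z] at h
    rw [hC]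
    exact h
  have hTB : ∀ z, (SSE.Ex fun x => SSE.T σ (B z) x ^ 2) ≤ C := by
    intro z
    have h := SSE.hc σ hσ0 hσ1 (B z)
    rw [hσ2] at h
    rw [hBex z] at h
    rw [hC]
    exact h
  have hterm : ∀ z, (SSE.Ex fun x => A z x * SSE.T ρ (B z) x) ≤ C := by
    intro z
    have e : (SSE.Ex fun x => A z x * SSE.T ρ (B z) x)
        = SSE.Ex fun x => SSE.T σ (A z) x * SSE.T σ (B z) x := by
      rw [← hσ2]
      exact SSE.Ex_mul_T σ (A z) (B z)
    rw [e]
    have hcs := SSE.Ex_cauchy (SSE.T σ (A z)) (SSE.T σ (B z))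
    have hEA : 0 ≤ SSE.Ex fun x => SSE.T σ (A z) x ^ 2 :=
      SSE.Ex_nonneg fun x => sq_nonneg _
    have hsq : (SSE.Ex fun x => SSE.T σ (A z) x * SSE.T σ (B z) x) ^ 2 ≤ C * C := by
      calc (SSE.Ex fun x => SSE.T σ (A z) x * SSE.T σ (B z) x) ^ 2
          ≤ (SSE.Ex fun x => SSE.T σ (A z) x ^ 2) * SSE.Ex fun x => SSE.T σ (B z) x ^ 2 := hcs
        _ ≤ C * C := mul_le_mul (hTA z) (hTB z) (SSE.Ex_nonneg fun x => sq_nonneg _) hC0.le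
    nlinarith [hsq, hC0]
  -- sum up
  have hsum : prPair ε (fun x y => f x = g y) ≤ (2 ^ k : ℝ) * C := by
    rw [hpr]
    calc ∑ z : Fin k → Bool, SSE.Ex (fun x => A z x * SSE.T ρ (B z) x)
        ≤ ∑ _z : Fin k → Bool, C := Finset.sum_le_sum fun z _ => hterm z
      _ = (2 ^ k : ℝ) * C := by
          rw [Finset.sum_const, Finset.card_univ]
          rw [Fintype.card_fun, Fintype.card_bool, Fintype.card_fin]
          rw [nsmul_eq_mul]
          push_cast
          ring
  refine hsum.trans (le_of_eq ?_)
  -- final computation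
  have e1 : ((1:ℝ) / 2 ^ k) = (2:ℝ) ^ (-(k:ℝ)) := by
    rw [Real.rpow_neg (by norm_num), Real.rpow_natCast]
    rw [one_div]
  have e2 : ((2:ℝ) ^ k : ℝ) = (2:ℝ) ^ ((k:ℝ)) := (Real.rpow_natCast 2 k).symm
  rw [hC, e1, e2]
  rw [← Real.rpow_mul (by norm_num : (0:ℝ) ≤ 2)]
  rw [← Real.rpow_add (by norm_num : (0:ℝ) < 2)]
  congr 1
  rw [hρ]
  have : (1 + (1 - 2 * ε) : ℝ) ≠ 0 := by intro h; linarith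
  field_simp
  ring
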